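/- For any positive semidefinite matrix A ∈ R^{n×n} and any k ≤ n, the rank-k ridge leverage scores satisfy τ_i^k(A) ≤ 2√(n/k)·τ_i^k(A^{1/2}) for every i. -/

import Mathlib

open Matrix

/-- Squared Frobenius norm of a matrix. -/
noncomputable def frobSq {n m : ℕ} (A : Matrix (Fin n) (Fin m) ℝ) : ℝ :=
  ∑ i, ∑ j, (A i j) ^ 2

/-- `P` is the Moore–Penrose pseudoinverse of `M` (the four Penrose conditions). -/
def IsMoorePenrose {n : ℕ} (M P : Matrix (Fin n) (Fin n) ℝ) : Prop :=
  M * P * M = M ∧ P * M * P = P ∧ (M * P)ᵀ = M * P ∧ (P * M)ᵀ = P * M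

namespace RLS

noncomputable def pinv (x : ℝ) : ℝ := if x = 0 then 0 else x⁻¹

lemma pinv_nonneg {x : ℝ} (hx : 0 ≤ x) : 0 ≤ pinv x := by
  unfold pinv; split <;> positivity

lemma mul_pinv_mul (x : ℝ) : x * pinv x * x = x := by
  unfold pinv; split
  · simp [*]
  · field_simp

lemma pinv_mul_x_mul_pinv (x : ℝ) : pinv x * x * pinv x = pinv x := by
  unfold pinv; split
  · simp [*]
  · field_simp

variable {n : ℕ}

lemma mp_unique {M P Q : Matrix (Fin n) (Fin n) ℝ}
    (hP : IsMoorePenrose M P) (hQ : IsMoorePenrose M Q) : P = Q := by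
  obtain ⟨hP1, hP2, hP3, hP4⟩ := hP
  obtain ⟨hQ1, hQ2, hQ3, hQ4⟩ := hQ
  have t1 : M * P = Pᵀ * Mᵀ := by rw [← transpose_mul, hP3]
  have t2 : M * Q = Qᵀ * Mᵀ := by rw [← transpose_mul, hQ3]
  have t1' : P * M = Mᵀ * Pᵀ := by rw [← transpose_mul, hP4]
  have t2' : Q * M = Mᵀ * Qᵀ := by rw [← transpose_mul, hQ4]
  have t3 : Mᵀ = Mᵀ * Qᵀ * Mᵀ := by
    conv_lhs => rw [← hQ1]
    simp [transpose_mul, mul_assoc]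
  have e1 : M * P = M * Q := by
    calc M * P = Pᵀ * Mᵀ := t1
    _ = Pᵀ * (Mᵀ * Qᵀ * Mᵀ) := by rw [← t3]
    _ = (Pᵀ * Mᵀ) * (Qᵀ * Mᵀ) := by simp only [mul_assoc]
    _ = (M * P) * (M * Q) := by rw [← t1, ← t2]
    _ = (M * P * M) * Q := by simp only [mul_assoc]
    _ = M * Q := by rw [hP1]
  have e2 : P * M = Q * M := by
    calc P * M = Mᵀ * Pᵀ := t1'
    _ = (Mᵀ * Qᵀ * Mᵀ) * Pᵀ := by rw [← t3]
    _ = (Mᵀ * Qᵀ) * (Mᵀ * Pᵀ) := by simp only [mul_assoc]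
    _ = (Q * M) * (P * M) := by rw [← t1', ← t2']
    _ = Q * (M * P * M) := by simp only [mul_assoc]
    _ = Q * M := by rw [hP1]
  calc P = P * M * P := hP2.symm
  _ = Q * M * P := by rw [e2]
  _ = Q * (M * P) := by simp only [mul_assoc]
  _ = Q * (M * Q) := by rw [e1]
  _ = Q * M * Q := by simp only [mul_assoc]
  _ = Q := hQ2

lemma mp_diagonal (d : Fin n → ℝ) :
    IsMoorePenrose (diagonal d) (diagonal fun j => pinv (d j)) := by
  refine ⟨?_, ?_, ?_, ?_⟩ <;> simp only [diagonal_mul_diagonal, diagonal_transpose]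
  · exact congrArg diagonal (funext fun j => mul_pinv_mul (d j))
  · exact congrArg diagonal (funext fun j => pinv_mul_x_mul_pinv (d j))

lemma conj_transpose_eq (V X : Matrix (Fin n) (Fin n) ℝ) :
    (V * X * Vᵀ)ᵀ = V * Xᵀ * Vᵀ := by
  simp [transpose_mul, mul_assoc]

lemma conj_mul_conj {V : Matrix (Fin n) (Fin n) ℝ} (hV1 : Vᵀ * V = 1)
    (X Y : Matrix (Fin n) (Fin n) ℝ) :
    (V * X * Vᵀ) * (V * Y * Vᵀ) = V * (X * Y) * Vᵀ := by
  calc (V * X * Vᵀ) * (V * Y * Vᵀ) = V * X * (Vᵀ * V) * (Y * Vᵀ) := by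
        simp only [mul_assoc]
  _ = V * (X * Y) * Vᵀ := by rw [hV1]; simp only [mul_one, mul_assoc]

lemma mp_conj {V M P : Matrix (Fin n) (Fin n) ℝ} (hV1 : Vᵀ * V = 1)
    (h : IsMoorePenrose M P) : IsMoorePenrose (V * M * Vᵀ) (V * P * Vᵀ) := by
  obtain ⟨h1, h2, h3, h4⟩ := h
  refine ⟨?_, ?_, ?_, ?_⟩
  · rw [conj_mul_conj hV1, conj_mul_conj hV1, h1]
  · rw [conj_mul_conj hV1, conj_mul_conj hV1, h2]
  · rw [conj_mul_conj hV1, conj_transpose_eq, h3]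
  · rw [conj_mul_conj hV1, conj_transpose_eq, h4]

lemma frobSq_eq_trace (M : Matrix (Fin n) (Fin n) ℝ) : frobSq M = trace (Mᵀ * M) := by
  unfold frobSq
  rw [Finset.sum_comm]
  simp [trace, diag, mul_apply, sq]

lemma trace_transpose_mul_self_nonneg (M : Matrix (Fin n) (Fin n) ℝ) :
    0 ≤ trace (Mᵀ * M) := by
  rw [← frobSq_eq_trace]
  unfold frobSq
  positivity

lemma frobSq_nonneg (M : Matrix (Fin n) (Fin n) ℝ) : 0 ≤ frobSq M := by
  unfold frobSq; positivity

lemma trace_conj {V : Matrix (Fin n) (Fin n) ℝ} (hV1 : Vᵀ * V = 1)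
    (X : Matrix (Fin n) (Fin n) ℝ) : trace (V * X * Vᵀ) = trace X := by
  rw [trace_mul_comm, ← mul_assoc, hV1, one_mul]

lemma frobSq_conj {V : Matrix (Fin n) (Fin n) ℝ} (hV1 : Vᵀ * V = 1)
    (M : Matrix (Fin n) (Fin n) ℝ) : frobSq (V * M * Vᵀ) = frobSq M := by
  rw [frobSq_eq_trace, conj_transpose_eq, conj_mul_conj hV1, trace_conj hV1,
    ← frobSq_eq_trace]

lemma frobSq_diagonal (d : Fin n → ℝ) : frobSq (diagonal d) = ∑ j, (d j) ^ 2 := by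
  unfold frobSq
  congr 1; funext i
  rw [Finset.sum_eq_single i]
  · simp
  · intro b _ hb; simp [diagonal_apply_ne' _ hb]
  · simp

lemma trace_mul_diagonal (d : Fin n → ℝ) (N : Matrix (Fin n) (Fin n) ℝ) :
    trace (diagonal d * N) = ∑ j, d j * N j j := by
  simp [trace, diag, diagonal_mul]

lemma conj_diag_entry (V : Matrix (Fin n) (Fin n) ℝ) (d : Fin n → ℝ) (i : Fin n) :
    (V * diagonal d * Vᵀ) i i = ∑ j, (V i j) ^ 2 * d j := by
  rw [Matrix.mul_apply (M := V * diagonal d) (N := Vᵀ)]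
  simp only [mul_diagonal, transpose_apply]
  congr 1; funext j
  ring

lemma dot_eq_entry {A : Matrix (Fin n) (Fin n) ℝ} (hA : Aᵀ = A)
    (P : Matrix (Fin n) (Fin n) ℝ) (i : Fin n) :
    (Aᵀ i) ⬝ᵥ (P *ᵥ (Aᵀ i)) = (A * P * A) i i := by
  simp only [dotProduct, mulVec, mul_apply, transpose_apply, Finset.mul_sum,
    Finset.sum_mul]
  rw [Finset.sum_comm]
  have hsym : ∀ a b, A a b = A b a := by
    intro a b
    nth_rewrite 1 [← hA]
    rw [transpose_apply]
  congr 1; funext j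
  congr 1; funext l
  rw [hsym i l]; ring

lemma exists_topk (f : Fin n → ℝ) (k : ℕ) (hk : k ≤ n) :
    ∃ S : Finset (Fin n), S.card = k ∧ ∀ i ∈ S, ∀ j ∉ S, f j ≤ f i := by
  induction k with
  | zero => exact ⟨∅, rfl, by simp⟩
  | succ m ih =>
    obtain ⟨S, hcard, hprop⟩ := ih (Nat.le_of_succ_le hk)
    have hne : Sᶜ.Nonempty := by
      apply Finset.card_pos.mp
      rw [Finset.card_compl, hcard, Fintype.card_fin]
      omega
    obtain ⟨j₀, hj₀, hmax⟩ := Sᶜ.exists_max_image f hne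
    refine ⟨insert j₀ S, ?_, ?_⟩
    · rw [Finset.card_insert_of_notMem (Finset.mem_compl.mp hj₀), hcard]
    · intro i hi j hj
      rcases Finset.mem_insert.mp hi with h | h
      · subst h
        exact hmax j (Finset.mem_compl.mpr fun hc => hj (Finset.mem_insert_of_mem hc))
      · exact hprop i h j fun hc => hj (Finset.mem_insert_of_mem hc)

lemma sum_compress_lower (c p : Fin n → ℝ) (S : Finset (Fin n))
    (hc : ∀ j, 0 ≤ c j) (hp0 : ∀ j, 0 ≤ p j) (hp1 : ∀ j, p j ≤ 1)
    (hsum : ((n : ℝ) - S.card) ≤ ∑ j, p j)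
    (hS : ∀ i ∈ S, ∀ j ∉ S, c j ≤ c i) :
    ∑ j ∈ Sᶜ, c j ≤ ∑ j, c j * p j := by
  by_cases hcompl : Sᶜ.Nonempty
  · obtain ⟨j₀, hj₀, hmax⟩ := Sᶜ.exists_max_image c hcompl
    have hj₀S : j₀ ∉ S := Finset.mem_compl.mp hj₀
    have split : ∑ j, c j * p j = ∑ j ∈ S, c j * p j + ∑ j ∈ Sᶜ, c j * p j :=
      (Finset.sum_add_sum_compl S _).symm
    have hSp : ∑ j ∈ Sᶜ, c j * (1 - p j) ≤ c j₀ * ∑ j ∈ S, p j := by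
      have h1 : ∑ j ∈ Sᶜ, c j * (1 - p j) ≤ ∑ j ∈ Sᶜ, c j₀ * (1 - p j) := by
        apply Finset.sum_le_sum
        intro j hj
        have := hmax j hj
        nlinarith [hp1 j, hp0 j]
      have h2 : ∑ j ∈ Sᶜ, c j₀ * (1 - p j) = c j₀ * ((Sᶜ.card : ℝ) - ∑ j ∈ Sᶜ, p j) := by
        have hterm : ∀ j : Fin n, c j₀ * (1 - p j) = c j₀ - c j₀ * p j := fun j => by ring
        simp only [hterm]
        rw [Finset.sum_sub_distrib, Finset.sum_const, nsmul_eq_mul, mul_sub, Finset.mul_sum]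
        ring
      have h3 : ((Sᶜ.card : ℝ) - ∑ j ∈ Sᶜ, p j) ≤ ∑ j ∈ S, p j := by
        have hcc : (Sᶜ.card : ℝ) = (n : ℝ) - S.card := by
          rw [Finset.card_compl]
          have := Finset.card_le_univ S
          simp only [Fintype.card_fin] at *
          push_cast [Nat.cast_sub this]
          ring
        have hps : ∑ j, p j = ∑ j ∈ S, p j + ∑ j ∈ Sᶜ, p j :=
          (Finset.sum_add_sum_compl S _).symm
        rw [hcc]
        rw [hps] at hsum
        linarith
      calc ∑ j ∈ Sᶜ, c j * (1 - p j) ≤ c j₀ * ((Sᶜ.card : ℝ) - ∑ j ∈ Sᶜ, p j) := by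
            rw [← h2]; exact h1
      _ ≤ c j₀ * ∑ j ∈ S, p j := by
            apply mul_le_mul_of_nonneg_left h3 (hc j₀)
    have hSlow : c j₀ * ∑ j ∈ S, p j ≤ ∑ j ∈ S, c j * p j := by
      rw [Finset.mul_sum]
      apply Finset.sum_le_sum
      intro i hi
      exact mul_le_mul_of_nonneg_right (hS i hi j₀ hj₀S) (hp0 i)
    have expand : ∑ j ∈ Sᶜ, c j * p j = ∑ j ∈ Sᶜ, c j - ∑ j ∈ Sᶜ, c j * (1 - p j) := by
      rw [← Finset.sum_sub_distrib]
      congr 1; funext j; ring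
    rw [split, expand]
    linarith
  · rw [Finset.not_nonempty_iff_eq_empty] at hcompl
    rw [hcompl, Finset.sum_empty]
    apply Finset.sum_nonneg
    intro j _
    exact mul_nonneg (hc j) (hp0 j)

lemma key_scalar {t lA lB c : ℝ} (ht : 0 ≤ t) (hlA : 0 ≤ lA) (hlB : 0 ≤ lB)
    (hc : 2 ≤ c) (hrel : lB ^ 2 ≤ (c ^ 2 / 4) * lA) :
    t ^ 2 * pinv (t ^ 2 + lA) ≤ c * (t * pinv (t + lB)) := by
  rcases eq_or_lt_of_le ht with h0 | htpos
  · simp [← h0]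
  rcases eq_or_lt_of_le hlA with hA0 | hApos
  · have hB0 : lB = 0 := by nlinarith
    rw [← hA0, hB0, add_zero, add_zero]
    unfold pinv
    rw [if_neg (by positivity), if_neg (by positivity)]
    rw [mul_inv_cancel₀ (by positivity), mul_inv_cancel₀ (by positivity)]
    linarith
  · have hd1 : t ^ 2 + lA ≠ 0 := by positivity
    have hd2 : t + lB ≠ 0 := by positivity
    unfold pinv
    rw [if_neg hd1, if_neg hd2]
    have hrw : c * (t * (t + lB)⁻¹) = (c * t) / (t + lB) := by ring
    have hrw2 : t ^ 2 * (t ^ 2 + lA)⁻¹ = t ^ 2 / (t ^ 2 + lA) := by ring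
    rw [hrw, hrw2, div_le_div_iff₀ (by positivity) (by positivity)]
    have hc1 : (0:ℝ) < c - 1 := by linarith
    have hc2 : (0:ℝ) ≤ 15 * c ^ 2 - 16 * c := by nlinarith
    nlinarith [mul_nonneg ht (sq_nonneg (2 * (c - 1) * t - lB)),
      mul_nonneg ht (sub_nonneg.mpr hrel),
      mul_nonneg (mul_nonneg ht hlA) hc2, mul_pos htpos hc1,
      mul_pos (mul_pos htpos htpos) hApos]

lemma vecMulVec_transpose (a b : Fin n → ℝ) :
    (vecMulVec a b)ᵀ = vecMulVec b a := by
  ext i j; simp [vecMulVec_apply, mul_comm]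

lemma vecMulVec_mul_vecMulVec (a b c d : Fin n → ℝ) :
    vecMulVec a b * vecMulVec c d = (b ⬝ᵥ c) • vecMulVec a d := by
  ext i j
  simp only [mul_apply, vecMulVec_apply, Matrix.smul_apply, dotProduct, smul_eq_mul,
    Finset.sum_mul]
  exact Finset.sum_congr rfl fun l _ => by ring

lemma mul_vecMulVec (M : Matrix (Fin n) (Fin n) ℝ) (a b : Fin n → ℝ) :
    M * vecMulVec a b = vecMulVec (M *ᵥ a) b := by
  ext i j
  simp only [mul_apply, vecMulVec_apply, mulVec, dotProduct, Finset.sum_mul]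
  congr 1; funext l; ring

lemma trace_vecMulVec (a b : Fin n → ℝ) : trace (vecMulVec a b) = a ⬝ᵥ b := by
  simp [trace, diag, vecMulVec_apply, dotProduct]

lemma exists_projection (k : ℕ) (Ak : Matrix (Fin n) (Fin n) ℝ)
    (hrank : Ak.rank ≤ k) :
    ∃ Pr : Matrix (Fin n) (Fin n) ℝ, Prᵀ = Pr ∧ Pr * Pr = Pr ∧ Ak * Pr = 0 ∧
      ((n : ℝ) - (k : ℝ)) ≤ trace Pr := by
  classical
  set K := LinearMap.ker (Matrix.mulVecLin Ak) with hK
  have hrn : Ak.rank + Module.finrank ℝ K = n := by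
    have := LinearMap.finrank_range_add_finrank_ker (Matrix.mulVecLin Ak)
    rw [Matrix.rank]
    simpa using this
  let e : EuclideanSpace ℝ (Fin n) ≃ₗ[ℝ] (Fin n → ℝ) :=
    WithLp.linearEquiv 2 ℝ (Fin n → ℝ)
  set W : Submodule ℝ (EuclideanSpace ℝ (Fin n)) := K.map (e.symm : (Fin n → ℝ) →ₗ[ℝ] EuclideanSpace ℝ (Fin n)) with hW
  have hWrank : Module.finrank ℝ W = Module.finrank ℝ K :=
    LinearEquiv.finrank_map_eq _ _
  let b := stdOrthonormalBasis ℝ W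
  let w : Fin (Module.finrank ℝ W) → (Fin n → ℝ) :=
    fun t => e ((b t : W) : EuclideanSpace ℝ (Fin n))
  have hker : ∀ t, Ak *ᵥ (w t) = 0 := by
    intro t
    have hmem : ((b t : W) : EuclideanSpace ℝ (Fin n)) ∈ W := (b t : W).2
    obtain ⟨y, hy, hye⟩ := Submodule.mem_map.mp hmem
    have : w t = y := by
      simp only [w, ← hye]
      exact e.apply_symm_apply y
    rw [this]
    exact hy
  have horth : ∀ s t, (w s) ⬝ᵥ (w t) = if s = t then 1 else 0 := by
    intro s t
    have h1 : (w s) ⬝ᵥ (w t)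
        = (inner ℝ ((b s : W) : EuclideanSpace ℝ (Fin n))
            ((b t : W) : EuclideanSpace ℝ (Fin n)) : ℝ) := by
      simp only [dotProduct, PiLp.inner_apply, RCLike.inner_apply, w]
      exact Finset.sum_congr rfl fun x _ => by rw [RCLike.conj_to_real, mul_comm]; rfl
    have h2 : (inner ℝ ((b s : W) : EuclideanSpace ℝ (Fin n))
          ((b t : W) : EuclideanSpace ℝ (Fin n)) : ℝ)
        = (inner ℝ (b s) (b t) : ℝ) := (Submodule.coe_inner _ _ _).symm
    rw [h1, h2, orthonormal_iff_ite.mp b.orthonormal s t]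
  refine ⟨∑ t, vecMulVec (w t) (w t), ?_, ?_, ?_, ?_⟩
  · rw [transpose_sum]
    congr 1; funext t
    exact vecMulVec_transpose _ _
  · rw [Finset.sum_mul_sum]
    rw [Finset.sum_congr rfl (fun s _ => Finset.sum_congr rfl
      (fun t _ => vecMulVec_mul_vecMulVec (w s) (w s) (w t) (w t)))]
    rw [Finset.sum_congr rfl (fun s _ => Finset.sum_congr rfl
      (fun t _ => by rw [horth s t]))]
    simp [ite_smul]
  · rw [Finset.mul_sum]
    have hz : ∀ t, Ak * vecMulVec (w t) (w t) = 0 := by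
      intro t
      rw [mul_vecMulVec, hker t]
      ext i j
      simp [vecMulVec_apply]
    simp [hz]
  · rw [trace_sum]
    rw [Finset.sum_congr rfl (fun t _ => by rw [trace_vecMulVec, horth t t, if_pos rfl])]
    rw [Finset.sum_const, nsmul_eq_mul, mul_one, Finset.card_univ, Fintype.card_fin]
    rw [hWrank]
    have h1 : (n : ℝ) = (Ak.rank : ℝ) + (Module.finrank ℝ K : ℝ) := by
      exact_mod_cast hrn.symm
    have h2 : (Ak.rank : ℝ) ≤ (k : ℝ) := by exact_mod_cast hrank
    linarith

lemma trace_mul_proj (N Q : Matrix (Fin n) (Fin n) ℝ) (hQT : Qᵀ = Q)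
    (hQ2 : Q * Q = Q) : trace (Nᵀ * N * Q) = trace ((N * Q)ᵀ * (N * Q)) := by
  calc trace (Nᵀ * N * Q) = trace (Nᵀ * N * (Q * Q)) := by rw [hQ2]
  _ = trace ((Nᵀ * N * Q) * Q) := by rw [mul_assoc, mul_assoc, mul_assoc]
  _ = trace (Q * (Nᵀ * N * Q)) := trace_mul_comm _ _
  _ = trace ((N * Q)ᵀ * (N * Q)) := by
      rw [transpose_mul, hQT]
      simp only [mul_assoc]

lemma frob_ge_trace {Asym Ak Pr : Matrix (Fin n) (Fin n) ℝ} (hAsym : Asymᵀ = Asym)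
    (hPrT : Prᵀ = Pr) (hPr2 : Pr * Pr = Pr) (hAkPr : Ak * Pr = 0) :
    trace (Asym * Asym * Pr) ≤ frobSq (Asym - Ak) := by
  set M := Asym - Ak with hM
  have hQT : (1 - Pr)ᵀ = 1 - Pr := by rw [transpose_sub, transpose_one, hPrT]
  have hQ2 : (1 - Pr) * (1 - Pr) = 1 - Pr := by
    rw [mul_sub, mul_one, sub_mul, one_mul, hPr2]
    simp
  have hsplit : frobSq M = trace (Mᵀ * M * Pr) + trace (Mᵀ * M * (1 - Pr)) := by
    rw [frobSq_eq_trace, ← trace_add, ← mul_add]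
    simp
  have hpos : 0 ≤ trace (Mᵀ * M * (1 - Pr)) := by
    rw [trace_mul_proj _ _ hQT hQ2]
    exact trace_transpose_mul_self_nonneg _
  have hMP : M * Pr = Asym * Pr := by rw [hM, sub_mul, hAkPr, sub_zero]
  have hmain : trace (Mᵀ * M * Pr) = trace (Asym * Asym * Pr) := by
    rw [trace_mul_proj _ _ hPrT hPr2, hMP, ← trace_mul_proj _ _ hPrT hPr2, hAsym]
  linarith [hsplit, hpos, hmain]

lemma diag_entry_nonneg (X : Matrix (Fin n) (Fin n) ℝ) (j : Fin n) :
    0 ≤ (Xᵀ * X) j j := by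
  rw [mul_apply]
  apply Finset.sum_nonneg
  intro a _
  rw [transpose_apply]
  exact mul_self_nonneg _

lemma sandwich_nonneg {Q : Matrix (Fin n) (Fin n) ℝ} (hQT : Qᵀ = Q)
    (hQ2 : Q * Q = Q) (V : Matrix (Fin n) (Fin n) ℝ) (j : Fin n) :
    0 ≤ (Vᵀ * Q * V) j j := by
  have e : Vᵀ * Q * V = (Q * V)ᵀ * (Q * V) := by
    calc Vᵀ * Q * V = Vᵀ * (Q * Q) * V := by rw [hQ2]
    _ = (Q * V)ᵀ * (Q * V) := by
        rw [transpose_mul, hQT]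
        simp only [mul_assoc]
  rw [e]
  exact diag_entry_nonneg _ _

end RLS

/-- For PSD `A` with PSD square root `B`, the rank-`k` ridge leverage scores satisfy
`τ_i^k(A) ≤ 2√(n/k)·τ_i^k(A^{1/2})`. -/
theorem ridge_leverage_score_bound {n k : ℕ} (hk : 1 ≤ k) (hkn : k ≤ n)
    (A B : Matrix (Fin n) (Fin n) ℝ)
    (hA : A.PosSemidef) (hB : B.PosSemidef) (hBB : B * B = A)
    (Ak Bk : Matrix (Fin n) (Fin n) ℝ)
    (hAkrank : Ak.rank ≤ k)
    (hAkbest : ∀ D : Matrix (Fin n) (Fin n) ℝ, D.rank ≤ k →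
      frobSq (A - Ak) ≤ frobSq (A - D))
    (hBkrank : Bk.rank ≤ k)
    (hBkbest : ∀ D : Matrix (Fin n) (Fin n) ℝ, D.rank ≤ k →
      frobSq (B - Bk) ≤ frobSq (B - D))
    (P1 P2 : Matrix (Fin n) (Fin n) ℝ)
    (hP1 : IsMoorePenrose
      (A * Aᵀ + (frobSq (A - Ak) / (k : ℝ)) • (1 : Matrix (Fin n) (Fin n) ℝ)) P1)
    (hP2 : IsMoorePenrose
      (B * Bᵀ + (frobSq (B - Bk) / (k : ℝ)) • (1 : Matrix (Fin n) (Fin n) ℝ)) P2)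
    (i : Fin n) :
    (Aᵀ i) ⬝ᵥ (P1 *ᵥ (Aᵀ i))
      ≤ 2 * Real.sqrt ((n : ℝ) / (k : ℝ)) * ((Bᵀ i) ⬝ᵥ (P2 *ᵥ (Bᵀ i))) := by
  classical
  set lamA := frobSq (A - Ak) / (k : ℝ) with hlamA
  set lamB := frobSq (B - Bk) / (k : ℝ) with hlamB
  have hAH : A.IsHermitian := hA.1
  have hBH : B.IsHermitian := hB.1
  have hconjT : ∀ M : Matrix (Fin n) (Fin n) ℝ, Mᴴ = Mᵀ := fun M => by
    ext a b; simp [conjTranspose_apply]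
  have hAsym : Aᵀ = A := by rw [← hconjT, hAH]
  have hBsym : Bᵀ = B := by rw [← hconjT, hBH]
  -- spectral decomposition of B
  set σ : Fin n → ℝ := hBH.eigenvalues with hσ
  set V : Matrix (Fin n) (Fin n) ℝ := (hBH.eigenvectorUnitary : Matrix (Fin n) (Fin n) ℝ)
    with hVdef
  have hV1 : Vᵀ * V = 1 := by
    have h := (Matrix.mem_unitaryGroup_iff').mp hBH.eigenvectorUnitary.2
    simpa [star_eq_conjTranspose, conjTranspose_eq_transpose_of_trivial] using h
  have hV2 : V * Vᵀ = 1 := by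
    have h := (Matrix.mem_unitaryGroup_iff).mp hBH.eigenvectorUnitary.2
    simpa [star_eq_conjTranspose, conjTranspose_eq_transpose_of_trivial] using h
  have hBspec : B = V * diagonal σ * Vᵀ := by
    have h := hBH.spectral_theorem
    simpa [star_eq_conjTranspose, conjTranspose_eq_transpose_of_trivial] using h
  set t : Fin n → ℝ := fun j => σ j ^ 2 with ht
  have ht0 : ∀ j, 0 ≤ t j := fun j => by rw [ht]; positivity
  have hAspec : A = V * diagonal t * Vᵀ := by
    rw [← hBB, hBspec, RLS.conj_mul_conj hV1, diagonal_mul_diagonal]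
    have e : (fun i => σ i * σ i) = t := by funext j; simp [ht, sq]
    rw [e]
  have hAA : A * A = V * diagonal (fun j => t j ^ 2) * Vᵀ := by
    rw [hAspec, RLS.conj_mul_conj hV1, diagonal_mul_diagonal]
    have e : (fun i => t i * t i) = fun j => t j ^ 2 := by funext j; simp [sq]
    rw [e]
  -- numeric facts
  have hk0 : (0:ℝ) < (k : ℝ) := by exact_mod_cast hk
  have hnk1 : (1:ℝ) ≤ (n:ℝ)/(k:ℝ) := by
    rw [le_div_iff₀ hk0, one_mul]
    exact_mod_cast hkn
  set c := 2 * Real.sqrt ((n:ℝ)/(k:ℝ)) with hc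
  have hc2 : 2 ≤ c := by
    have h1 : (1:ℝ) ≤ Real.sqrt ((n:ℝ)/(k:ℝ)) := by
      rw [show (1:ℝ) = Real.sqrt 1 by simp]
      exact Real.sqrt_le_sqrt hnk1
    rw [hc]; linarith
  have hcsq : c ^ 2 / 4 = (n:ℝ)/(k:ℝ) := by
    rw [hc, mul_pow, Real.sq_sqrt (by positivity)]
    ring
  -- top-k set
  obtain ⟨S, hScard, hStop⟩ := RLS.exists_topk (fun j => t j ^ 2) k hkn
  set TA := ∑ j ∈ Sᶜ, t j ^ 2 with hTAdef
  set TB := ∑ j ∈ Sᶜ, t j with hTBdef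
  -- (1) lower bound on Frobenius error of A
  obtain ⟨Pr, hPrT, hPr2, hPrKer, hPrTr⟩ := RLS.exists_projection k Ak hAkrank
  set N := Vᵀ * Pr * V with hN
  have htrace1 : trace (A * A * Pr) = ∑ j, t j ^ 2 * N j j := by
    rw [hAA]
    calc trace (V * diagonal (fun j => t j ^ 2) * Vᵀ * Pr)
        = trace (V * (diagonal (fun j => t j ^ 2) * Vᵀ * Pr)) := by
          simp only [mul_assoc]
    _ = trace ((diagonal (fun j => t j ^ 2) * Vᵀ * Pr) * V) := trace_mul_comm _ _
    _ = trace (diagonal (fun j => t j ^ 2) * (Vᵀ * Pr * V)) := by simp only [mul_assoc]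
    _ = ∑ j, t j ^ 2 * N j j := RLS.trace_mul_diagonal _ _
  have hp0 : ∀ j, 0 ≤ N j j := fun j => RLS.sandwich_nonneg hPrT hPr2 V j
  have hp1 : ∀ j, N j j ≤ 1 := by
    intro j
    have hQT : (1 - Pr)ᵀ = 1 - Pr := by rw [transpose_sub, transpose_one, hPrT]
    have hQ2 : (1 - Pr) * (1 - Pr) = 1 - Pr := by
      rw [mul_sub, mul_one, sub_mul, one_mul, hPr2]
      simp
    have h2 := RLS.sandwich_nonneg hQT hQ2 V j
    have e : Vᵀ * (1 - Pr) * V = 1 - N := by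
      rw [mul_sub, mul_one, sub_mul, hV1, hN]
    rw [e, Matrix.sub_apply, one_apply_eq] at h2
    linarith
  have hsum : ((n:ℝ) - S.card) ≤ ∑ j, N j j := by
    have htr : ∑ j, N j j = trace Pr := by
      have h1 : ∑ j, N j j = trace N := by simp [trace, diag]
      rw [h1, hN]
      calc trace (Vᵀ * Pr * V) = trace (V * (Vᵀ * Pr)) := trace_mul_comm _ _
      _ = trace ((V * Vᵀ) * Pr) := by simp only [mul_assoc]
      _ = trace Pr := by rw [hV2, one_mul]
    rw [htr, hScard]
    exact hPrTr
  have hTA : TA ≤ frobSq (A - Ak) := by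
    have h1 := RLS.sum_compress_lower (fun j => t j ^ 2) (fun j => N j j) S
      (fun j => by positivity) hp0 hp1 hsum hStop
    have h3 : trace (A * A * Pr) ≤ frobSq (A - Ak) :=
      RLS.frob_ge_trace hAsym hPrT hPr2 hPrKer
    rw [hTAdef]
    calc ∑ j ∈ Sᶜ, t j ^ 2 ≤ ∑ j, t j ^ 2 * N j j := h1
    _ = trace (A * A * Pr) := htrace1.symm
    _ ≤ frobSq (A - Ak) := h3
  -- (2) upper bound on Frobenius error of B
  have hFB : frobSq (B - Bk) ≤ TB := by
    set D := V * diagonal (fun j => if j ∈ S then σ j else 0) * Vᵀ with hD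
    have hVu : IsUnit V.det := by
      have h : V.det * Vᵀ.det = 1 := by rw [← det_mul, hV2, det_one]
      exact IsUnit.of_mul_eq_one _ h
    have hVtu : IsUnit Vᵀ.det := by rw [det_transpose]; exact hVu
    have hDrank : D.rank ≤ k := by
      rw [hD, Matrix.rank_mul_eq_left_of_isUnit_det Vᵀ _ hVtu,
        Matrix.rank_mul_eq_right_of_isUnit_det V _ hVu, Matrix.rank_diagonal]
      have hsub : Finset.univ.filter
          (fun j => (if j ∈ S then σ j else 0) ≠ 0) ⊆ S := by
        intro j hj
        simp only [Finset.mem_filter] at hj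
        by_contra hjS
        rw [if_neg hjS] at hj
        exact hj.2 rfl
      calc Fintype.card {j // (if j ∈ S then σ j else 0) ≠ 0}
          = (Finset.univ.filter (fun j => (if j ∈ S then σ j else 0) ≠ 0)).card :=
            Fintype.card_subtype _
      _ ≤ S.card := Finset.card_le_card hsub
      _ = k := hScard
    have e2 : (diagonal (fun j => σ j - if j ∈ S then σ j else 0) :
        Matrix (Fin n) (Fin n) ℝ) = diagonal (fun j => if j ∈ S then 0 else σ j) := by
      have efun : (fun j => σ j - if j ∈ S then σ j else 0)
          = (fun j : Fin n => if j ∈ S then 0 else σ j) := by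
        funext j
        by_cases h : j ∈ S <;> simp [h]
      rw [efun]
    have hBD : B - D = V * diagonal (fun j => if j ∈ S then 0 else σ j) * Vᵀ := by
      rw [hBspec, hD, ← sub_mul, ← mul_sub, Matrix.diagonal_sub, e2]
    have hfrobBD : frobSq (B - D) = TB := by
      rw [hBD, RLS.frobSq_conj hV1, RLS.frobSq_diagonal]
      have e3 : ∀ j : Fin n, (if j ∈ S then (0:ℝ) else σ j) ^ 2
          = if j ∈ Sᶜ then t j else 0 := by
        intro j
        by_cases h : j ∈ S <;> simp [h, ht]
      simp only [e3]
      rw [Finset.sum_ite_mem, Finset.univ_inter, hTBdef]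
    rw [← hfrobBD]
    exact hBkbest D hDrank
  -- (3) Cauchy–Schwarz
  have hTA0 : 0 ≤ TA := Finset.sum_nonneg fun j _ => by positivity
  have hCS : TB ^ 2 ≤ (n : ℝ) * TA := by
    have h := Finset.sum_mul_sq_le_sq_mul_sq Sᶜ (fun _ => (1:ℝ)) t
    simp only [one_mul, one_pow, Finset.sum_const, nsmul_eq_mul, mul_one] at h
    have hcard : ((Sᶜ.card : ℝ)) ≤ (n : ℝ) := by
      have := Finset.card_le_univ Sᶜ
      simp only [Finset.card_univ, Fintype.card_fin] at this
      exact_mod_cast this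
    calc TB ^ 2 ≤ (Sᶜ.card : ℝ) * TA := by rw [hTBdef, hTAdef]; exact h
    _ ≤ (n : ℝ) * TA := mul_le_mul_of_nonneg_right hcard hTA0
  -- (4) the relation between the two regularizers
  have hFB0 : 0 ≤ frobSq (B - Bk) := RLS.frobSq_nonneg _
  have hlamA0 : 0 ≤ lamA := div_nonneg (RLS.frobSq_nonneg _) hk0.le
  have hlamB0 : 0 ≤ lamB := div_nonneg hFB0 hk0.le
  have hrel : lamB ^ 2 ≤ (c ^ 2 / 4) * lamA := by
    rw [hcsq, hlamA, hlamB]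
    have hnum : frobSq (B - Bk) ^ 2 ≤ (n : ℝ) * frobSq (A - Ak) := by
      have h1 : frobSq (B - Bk) ^ 2 ≤ TB ^ 2 := by nlinarith [hFB, hFB0]
      have h2 : (n : ℝ) * TA ≤ (n : ℝ) * frobSq (A - Ak) :=
        mul_le_mul_of_nonneg_left hTA (Nat.cast_nonneg n)
      linarith
    rw [div_pow, show (n:ℝ)/(k:ℝ) * (frobSq (A - Ak) / (k:ℝ))
      = ((n:ℝ) * frobSq (A - Ak)) / (k:ℝ)^2 by ring]
    gcongr
  -- identify P1 and P2 via uniqueness of the Moore–Penrose pseudoinverse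
  have hM1 : A * Aᵀ + lamA • (1 : Matrix (Fin n) (Fin n) ℝ)
      = V * diagonal (fun j => t j ^ 2 + lamA) * Vᵀ := by
    rw [hAsym, hAA, smul_one_eq_diagonal]
    have h1 : (diagonal (fun _ => lamA) : Matrix (Fin n) (Fin n) ℝ)
        = V * diagonal (fun _ => lamA) * Vᵀ := by
      rw [← smul_one_eq_diagonal, Matrix.mul_smul, Matrix.smul_mul, mul_one, hV2]
    rw [h1, ← add_mul, ← mul_add, diagonal_add]
  have hM2 : B * Bᵀ + lamB • (1 : Matrix (Fin n) (Fin n) ℝ)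
      = V * diagonal (fun j => t j + lamB) * Vᵀ := by
    rw [hBsym, hBB, hAspec, smul_one_eq_diagonal]
    have h1 : (diagonal (fun _ => lamB) : Matrix (Fin n) (Fin n) ℝ)
        = V * diagonal (fun _ => lamB) * Vᵀ := by
      rw [← smul_one_eq_diagonal, Matrix.mul_smul, Matrix.smul_mul, mul_one, hV2]
    rw [h1, ← add_mul, ← mul_add, diagonal_add]
  rw [hM1] at hP1
  rw [hM2] at hP2
  have hP1' : P1 = V * diagonal (fun j => RLS.pinv (t j ^ 2 + lamA)) * Vᵀ :=
    RLS.mp_unique hP1 (RLS.mp_conj hV1 (RLS.mp_diagonal _))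
  have hP2' : P2 = V * diagonal (fun j => RLS.pinv (t j + lamB)) * Vᵀ :=
    RLS.mp_unique hP2 (RLS.mp_conj hV1 (RLS.mp_diagonal _))
  -- compute both leverage scores
  have hL : (Aᵀ i) ⬝ᵥ (P1 *ᵥ (Aᵀ i))
      = ∑ j, (V i j) ^ 2 * (t j ^ 2 * RLS.pinv (t j ^ 2 + lamA)) := by
    rw [RLS.dot_eq_entry hAsym P1 i, hP1', hAspec]
    rw [RLS.conj_mul_conj hV1, RLS.conj_mul_conj hV1, diagonal_mul_diagonal,
      diagonal_mul_diagonal, RLS.conj_diag_entry]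
    exact Finset.sum_congr rfl fun j _ => by ring
  have hR : (Bᵀ i) ⬝ᵥ (P2 *ᵥ (Bᵀ i))
      = ∑ j, (V i j) ^ 2 * (t j * RLS.pinv (t j + lamB)) := by
    rw [RLS.dot_eq_entry hBsym P2 i, hP2', hBspec]
    rw [RLS.conj_mul_conj hV1, RLS.conj_mul_conj hV1, diagonal_mul_diagonal,
      diagonal_mul_diagonal, RLS.conj_diag_entry]
    refine Finset.sum_congr rfl fun j _ => ?_
    rw [ht]
    ring
  rw [hL, hR, Finset.mul_sum]
  apply Finset.sum_le_sum
  intro j _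
  have hkey := RLS.key_scalar (ht0 j) hlamA0 hlamB0 hc2 hrel
  calc (V i j) ^ 2 * (t j ^ 2 * RLS.pinv (t j ^ 2 + lamA))
      ≤ (V i j) ^ 2 * (c * (t j * RLS.pinv (t j + lamB))) :=
        mul_le_mul_of_nonneg_left hkey (sq_nonneg _)
  _ = c * ((V i j) ^ 2 * (t j * RLS.pinv (t j + lamB))) := by ring
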